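/- Suppose u ∈ U, (c, h) ∈ X, d ∈ D, w ∈ ℝᵖ with d + w ∈ D, and (ĉ, ĥ, d̂) ∈ Î. Let the plant evolve by (c⁺, h⁺) = f((c, h), u) and d⁺ = d + w, with measured output y = W_y h + b_y + d, and let (ĉ⁺, ĥ⁺, d̂⁺) be the observer update. Then the estimation errors e_c = c − ĉ, e_h = h − ĥ, e_d = d − d̂ satisfy, componentwise, (‖c⁺ − ĉ⁺‖, ‖h⁺ − ĥ⁺‖, ‖d⁺ − d̂⁺‖)ᵀ ≤ A_d · (‖e_c‖, ‖e_h‖, ‖e_d‖)ᵀ + (0, 0, 1)ᵀ · ‖w‖. -/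

import Mathlib

open Matrix Filter Set
open scoped ENNReal NNReal BigOperators

noncomputable section

namespace LSTMmpc

/-- The logistic sigmoid `σ(z) = 1/(1+e^{-z})`. -/
def sigmoid (z : ℝ) : ℝ := 1 / (1 + Real.exp (-z))

/-- Euclidean norm of a finite real vector. -/
def enorm {k : ℕ} (v : Fin k → ℝ) : ℝ := Real.sqrt (∑ i, v i ^ 2)

/-- Sup (∞) norm of a finite real vector. -/
def vinf {k : ℕ} (v : Fin k → ℝ) : ℝ := ⨆ i, |v i|

/-- Spectral (ℓ²-induced) norm of a real matrix. -/
def spec {a b : ℕ} (M : Matrix (Fin a) (Fin b) ℝ) : ℝ :=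
  ⨆ v : {v : Fin b → ℝ // enorm v ≤ 1}, enorm (M.mulVec v.1)

/-- Induced ∞-norm (maximum absolute row sum) of the horizontal block `[s•A, B, v]`. -/
def rowNorm3 {n m : ℕ} (s : ℝ) (A : Matrix (Fin n) (Fin m) ℝ)
    (B : Matrix (Fin n) (Fin n) ℝ) (v : Fin n → ℝ) : ℝ :=
  ⨆ i, (∑ j, |s * A i j| + ∑ j, |B i j| + |v i|)

/-- Induced ∞-norm of the horizontal block `[s•A, B, v, C, t•D]`. -/
def rowNorm5 {n m p : ℕ} (s : ℝ) (A : Matrix (Fin n) (Fin m) ℝ)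
    (B : Matrix (Fin n) (Fin n) ℝ) (v : Fin n → ℝ)
    (C : Matrix (Fin n) (Fin n) ℝ) (t : ℝ) (D : Matrix (Fin n) (Fin p) ℝ) : ℝ :=
  ⨆ i, (∑ j, |s * A i j| + ∑ j, |B i j| + |v i| + ∑ j, |C i j| + ∑ j, |t * D i j|)

/-- Weighted norm `‖v‖_P = √(vᵀ P v)`. -/
def wnorm {k : ℕ} (P : Matrix (Fin k) (Fin k) ℝ) (v : Fin k → ℝ) : ℝ :=
  Real.sqrt (v ⬝ᵥ P.mulVec v)

/-- Minimum eigenvalue of a hermitian real matrix. -/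
def lamMin {k : ℕ} (P : Matrix (Fin k) (Fin k) ℝ) (hP : P.IsHermitian) : ℝ :=
  ⨅ i, hP.eigenvalues i

/-- Maximum eigenvalue of a hermitian real matrix. -/
def lamMax {k : ℕ} (P : Matrix (Fin k) (Fin k) ℝ) (hP : P.IsHermitian) : ℝ :=
  ⨆ i, hP.eigenvalues i

/-- Spectral radius (over `ℂ`) of a real square matrix. -/
def specRad {k : ℕ} (M : Matrix (Fin k) (Fin k) ℝ) : ℝ≥0∞ :=
  spectralRadius ℂ (M.map (fun x : ℝ => (x : ℂ)))

/-- Class `K∞` functions `[0,∞) → [0,∞)`. -/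
def IsClassKInf (γ : ℝ → ℝ) : Prop :=
  ContinuousOn γ (Set.Ici 0) ∧ γ 0 = 0 ∧ StrictMonoOn γ (Set.Ici 0) ∧
    (∀ s, 0 ≤ s → 0 ≤ γ s) ∧ Tendsto γ atTop atTop

/-- Class `KL` functions. -/
def IsClassKL (β : ℝ → ℕ → ℝ) : Prop :=
  (∀ k, ContinuousOn (fun s => β s k) (Set.Ici 0) ∧
      StrictMonoOn (fun s => β s k) (Set.Ici 0) ∧ β 0 k = 0) ∧
  (∀ s, 0 < s → StrictAnti (fun k => β s k) ∧ Tendsto (fun k => β s k) atTop (nhds 0)) ∧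
  (∀ s, 0 ≤ s → ∀ k, 0 ≤ β s k)

/-- Weights of an LSTM network. -/
structure LSTM (n m p : ℕ) where
  Wf : Matrix (Fin n) (Fin m) ℝ
  Wi : Matrix (Fin n) (Fin m) ℝ
  Wc : Matrix (Fin n) (Fin m) ℝ
  Wo : Matrix (Fin n) (Fin m) ℝ
  Uf : Matrix (Fin n) (Fin n) ℝ
  Ui : Matrix (Fin n) (Fin n) ℝ
  Uc : Matrix (Fin n) (Fin n) ℝ
  Uo : Matrix (Fin n) (Fin n) ℝ
  bf : Fin n → ℝ
  bi : Fin n → ℝ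
  bc : Fin n → ℝ
  bo : Fin n → ℝ
  Wy : Matrix (Fin p) (Fin n) ℝ
  bY : Fin p → ℝ

/-- LSTM state `(c, h)`. -/
abbrev State (n : ℕ) := (Fin n → ℝ) × (Fin n → ℝ)

/-- Augmented state `(c, h, d)`. -/
abbrev AugState (n p : ℕ) := (Fin n → ℝ) × (Fin n → ℝ) × (Fin p → ℝ)

variable {n m p : ℕ}

def stepC (S : LSTM n m p) (u : Fin m → ℝ) (c h : Fin n → ℝ) : Fin n → ℝ := fun j =>
  sigmoid ((S.Wf.mulVec u + S.Uf.mulVec h + S.bf) j) * c j +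
    sigmoid ((S.Wi.mulVec u + S.Ui.mulVec h + S.bi) j) *
      Real.tanh ((S.Wc.mulVec u + S.Uc.mulVec h + S.bc) j)

def stepH (S : LSTM n m p) (u : Fin m → ℝ) (c h : Fin n → ℝ) : Fin n → ℝ := fun j =>
  sigmoid ((S.Wo.mulVec u + S.Uo.mulVec h + S.bo) j) * Real.tanh (stepC S u c h j)

/-- One step of the LSTM dynamics `x⁺ = f(x, u)`. -/
def step (S : LSTM n m p) (x : State n) (u : Fin m → ℝ) : State n :=
  (stepC S u x.1 x.2, stepH S u x.1 x.2)

/-- Output map `g(x) = W_y h + b_y`. -/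
def out (S : LSTM n m p) (x : State n) : Fin p → ℝ := S.Wy.mulVec x.2 + S.bY

/-- LSTM trajectory. -/
def traj (S : LSTM n m p) (x0 : State n) (u : ℕ → Fin m → ℝ) : ℕ → State n
  | 0 => x0
  | k + 1 => step S (traj S x0 u k) (u k)

def sFb (S : LSTM n m p) (umax : ℝ) : ℝ := sigmoid (rowNorm3 umax S.Wf S.Uf S.bf)
def sIb (S : LSTM n m p) (umax : ℝ) : ℝ := sigmoid (rowNorm3 umax S.Wi S.Ui S.bi)
def sOb (S : LSTM n m p) (umax : ℝ) : ℝ := sigmoid (rowNorm3 umax S.Wo S.Uo S.bo)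
def sCb (S : LSTM n m p) (umax : ℝ) : ℝ := Real.tanh (rowNorm3 umax S.Wc S.Uc S.bc)
def sXb (S : LSTM n m p) (umax : ℝ) : ℝ :=
  Real.tanh (sIb S umax * sCb S umax / (1 - sFb S umax))
def alphaD (S : LSTM n m p) (umax : ℝ) : ℝ :=
  (1/4) * spec S.Uf * (sIb S umax * sCb S umax / (1 - sFb S umax)) +
    sIb S umax * spec S.Uc + (1/4) * spec S.Ui * sCb S umax
def betaD (S : LSTM n m p) (umax : ℝ) : ℝ :=
  (1/4) * spec S.Wf * (sIb S umax * sCb S umax / (1 - sFb S umax)) +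
    sIb S umax * spec S.Wc + (1/4) * spec S.Wi * sCb S umax
def Adelta (S : LSTM n m p) (umax : ℝ) : Matrix (Fin 2) (Fin 2) ℝ :=
  !![sFb S umax, alphaD S umax;
     sOb S umax * sFb S umax, alphaD S umax * sOb S umax + (1/4) * sXb S umax * spec S.Uo]
def Bdelta (S : LSTM n m p) (umax : ℝ) : Fin 2 → ℝ :=
  ![betaD S umax, betaD S umax * sOb S umax + (1/4) * sXb S umax * spec S.Wo]

def setU (m : ℕ) (umax : ℝ) : Set (Fin m → ℝ) := {u | vinf u ≤ umax}
def setH (n : ℕ) : Set (Fin n → ℝ) := {h | vinf h ≤ 1}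
def setC (S : LSTM n m p) (umax : ℝ) : Set (Fin n → ℝ) :=
  {c | vinf c ≤ sIb S umax * sCb S umax / (1 - sFb S umax)}
def setX (S : LSTM n m p) (umax : ℝ) : Set (State n) := (setC S umax) ×ˢ (setH n)
def setD (p : ℕ) (dmax : ℝ) : Set (Fin p → ℝ) := {d | vinf d ≤ dmax}

/-- Euclidean norm of the full state. -/
def xnorm {n : ℕ} (x : State n) : ℝ := Real.sqrt (∑ i, x.1 i ^ 2 + ∑ i, x.2 i ^ 2)

/-- Euclidean norm of the augmented state. -/
def chinorm {n p : ℕ} (χ : AugState n p) : ℝ :=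
  Real.sqrt (∑ i, χ.1 i ^ 2 + ∑ i, χ.2.1 i ^ 2 + ∑ i, χ.2.2 i ^ 2)

/-- Incremental input-to-state stability of the LSTM in `X` and `U`. -/
def deltaISS (S : LSTM n m p) (umax : ℝ) : Prop :=
  ∃ β γ, IsClassKL β ∧ IsClassKInf γ ∧
    ∀ (k : ℕ) (xa0 xb0 : State n), xa0 ∈ setX S umax → xb0 ∈ setX S umax →
      ∀ ua ub : ℕ → Fin m → ℝ,
        (∀ h < k, ua h ∈ setU m umax) → (∀ h < k, ub h ∈ setU m umax) →
        xnorm (traj S xa0 ua k - traj S xb0 ub k) ≤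
          β (xnorm (xa0 - xb0)) k + γ (⨆ h ∈ Finset.range k, enorm (ua h - ub h))

/-- Observer gains. -/
structure Gains (n p : ℕ) where
  Lf : Matrix (Fin n) (Fin p) ℝ
  Li : Matrix (Fin n) (Fin p) ℝ
  Lo : Matrix (Fin n) (Fin p) ℝ
  Ld : Matrix (Fin p) (Fin p) ℝ

/-- Componentwise saturation to `[-dmax, dmax]`. -/
def sat {p : ℕ} (dmax : ℝ) (v : Fin p → ℝ) : Fin p → ℝ := fun j =>
  min (max (v j) (-dmax)) dmax

/-- Observer output `ŷ = W_y ĥ + b_y + d̂`. -/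
def yhat (S : LSTM n m p) (hh : Fin n → ℝ) (dh : Fin p → ℝ) : Fin p → ℝ :=
  S.Wy.mulVec hh + S.bY + dh

def obsC (S : LSTM n m p) (G : Gains n p) (u : Fin m → ℝ) (y : Fin p → ℝ)
    (ch hh : Fin n → ℝ) (dh : Fin p → ℝ) : Fin n → ℝ := fun j =>
  sigmoid ((S.Wf.mulVec u + S.Uf.mulVec hh + S.bf + G.Lf.mulVec (y - yhat S hh dh)) j) * ch j +
    sigmoid ((S.Wi.mulVec u + S.Ui.mulVec hh + S.bi + G.Li.mulVec (y - yhat S hh dh)) j) *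
      Real.tanh ((S.Wc.mulVec u + S.Uc.mulVec hh + S.bc) j)

def obsH (S : LSTM n m p) (G : Gains n p) (u : Fin m → ℝ) (y : Fin p → ℝ)
    (ch hh : Fin n → ℝ) (dh : Fin p → ℝ) : Fin n → ℝ := fun j =>
  sigmoid ((S.Wo.mulVec u + S.Uo.mulVec hh + S.bo + G.Lo.mulVec (y - yhat S hh dh)) j) *
    Real.tanh (obsC S G u y ch hh dh j)

def obsD (S : LSTM n m p) (G : Gains n p) (dmax : ℝ) (y : Fin p → ℝ)
    (hh : Fin n → ℝ) (dh : Fin p → ℝ) : Fin p → ℝ :=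
  sat dmax (dh + G.Ld.mulVec (y - yhat S hh dh))

/-- One step of the observer. -/
def obsStep (S : LSTM n m p) (G : Gains n p) (dmax : ℝ) (u : Fin m → ℝ) (y : Fin p → ℝ)
    (χ : AugState n p) : AugState n p :=
  (obsC S G u y χ.1 χ.2.1 χ.2.2, obsH S G u y χ.1 χ.2.1 χ.2.2, obsD S G dmax y χ.2.1 χ.2.2)

/-- Observer trajectory. -/
def obsTraj (S : LSTM n m p) (G : Gains n p) (dmax : ℝ) (u : ℕ → Fin m → ℝ)
    (y : ℕ → Fin p → ℝ) (χ0 : AugState n p) : ℕ → AugState n p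
  | 0 => χ0
  | k + 1 => obsStep S G dmax (u k) (y k) (obsTraj S G dmax u y χ0 k)

def sFh (S : LSTM n m p) (G : Gains n p) (umax dmax : ℝ) : ℝ :=
  sigmoid (rowNorm5 umax S.Wf (S.Uf - G.Lf * S.Wy) S.bf (G.Lf * S.Wy) (2 * dmax) G.Lf)
def sIh (S : LSTM n m p) (G : Gains n p) (umax dmax : ℝ) : ℝ :=
  sigmoid (rowNorm5 umax S.Wi (S.Ui - G.Li * S.Wy) S.bi (G.Li * S.Wy) (2 * dmax) G.Li)
def sOh (S : LSTM n m p) (G : Gains n p) (umax dmax : ℝ) : ℝ :=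
  sigmoid (rowNorm5 umax S.Wo (S.Uo - G.Lo * S.Wy) S.bo (G.Lo * S.Wy) (2 * dmax) G.Lo)
def alphaH (S : LSTM n m p) (G : Gains n p) (umax : ℝ) : ℝ :=
  (1/4) * (sIb S umax * sCb S umax / (1 - sFb S umax)) * spec (S.Uf - G.Lf * S.Wy) +
    sIb S umax * spec S.Uc + (1/4) * sCb S umax * spec (S.Ui - G.Li * S.Wy)
def betaH (S : LSTM n m p) (G : Gains n p) (umax : ℝ) : ℝ :=
  (1/4) * (sIb S umax * sCb S umax / (1 - sFb S umax)) * spec G.Lf +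
    (1/4) * sCb S umax * spec G.Li
def gammaH (S : LSTM n m p) (G : Gains n p) (umax dmax : ℝ) : ℝ :=
  sOh S G umax dmax * alphaH S G umax + (1/4) * sXb S umax * spec (S.Uo - G.Lo * S.Wy)
def Ad (S : LSTM n m p) (G : Gains n p) (umax dmax : ℝ) : Matrix (Fin 3) (Fin 3) ℝ :=
  !![sFh S G umax dmax, alphaH S G umax, betaH S G umax;
     sOh S G umax dmax * sFh S G umax dmax, gammaH S G umax dmax,
       sOh S G umax dmax * betaH S G umax + (1/4) * sXb S umax * spec G.Lo;
     0, spec (G.Ld * S.Wy), spec ((1 : Matrix (Fin p) (Fin p) ℝ) - G.Ld)]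

def setChat (S : LSTM n m p) (G : Gains n p) (umax dmax : ℝ) : Set (Fin n → ℝ) :=
  {c | vinf c ≤ sIh S G umax dmax * sCb S umax / (1 - sFh S G umax dmax)}
def setIhat (S : LSTM n m p) (G : Gains n p) (umax dmax : ℝ) : Set (AugState n p) :=
  (setChat S G umax dmax) ×ˢ ((setH n) ×ˢ (setD p dmax))

/-- Incremental Lyapunov function for the LSTM. -/
def Vs {n : ℕ} (Ps : Matrix (Fin 2) (Fin 2) ℝ) (xa xb : State n) : ℝ :=
  wnorm Ps ![enorm (xa.1 - xb.1), enorm (xa.2 - xb.2)]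

/-- Lyapunov function for the observer estimation error. -/
def Vo {n p : ℕ} (Po : Matrix (Fin 3) (Fin 3) ℝ) (χh χ : AugState n p) : ℝ :=
  wnorm Po ![enorm (χh.1 - χ.1), enorm (χh.2.1 - χ.2.1), enorm (χh.2.2 - χ.2.2)]

/-- Disturbance-augmented LSTM update applied to the observer state. -/
def faug (S : LSTM n m p) (χ : AugState n p) (u : Fin m → ℝ) : AugState n p :=
  (stepC S u χ.1 χ.2.1, stepH S u χ.1 χ.2.1, χ.2.2)

def alphaBar (S : LSTM n m p) (G : Gains n p) (umax dmax : ℝ) : ℝ :=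
  (1/4) * (sIh S G umax dmax * sCb S umax / (1 - sFh S G umax dmax)) * spec (G.Lf * S.Wy) +
    (1/4) * sCb S umax * spec (G.Li * S.Wy)
def betaBar (S : LSTM n m p) (G : Gains n p) (umax dmax : ℝ) : ℝ :=
  (1/4) * (sIh S G umax dmax * sCb S umax / (1 - sFh S G umax dmax)) * spec G.Lf +
    (1/4) * sCb S umax * spec G.Li
def gammaBar (S : LSTM n m p) (G : Gains n p) (umax dmax : ℝ) : ℝ :=
  (1/4) * Real.tanh (sIh S G umax dmax * sCb S umax / (1 - sFh S G umax dmax))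
def Lmat (S : LSTM n m p) (G : Gains n p) (umax dmax : ℝ) : Matrix (Fin 3) (Fin 3) ℝ :=
  !![0, alphaBar S G umax dmax, betaBar S G umax dmax;
     0, gammaBar S G umax dmax * spec (G.Lo * S.Wy) + sOb S umax * alphaBar S G umax dmax,
       gammaBar S G umax dmax * spec G.Lo + sOb S umax * betaBar S G umax dmax;
     0, spec (G.Ld * S.Wy), spec G.Ld]



section AuxLemmas

lemma one_add_exp_pos (z : ℝ) : 0 < 1 + Real.exp (-z) := by positivity

lemma sigmoid_pos (z : ℝ) : 0 < sigmoid z := by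
  unfold sigmoid; positivity

lemma sigmoid_lt_one (z : ℝ) : sigmoid z < 1 := by
  unfold sigmoid
  rw [div_lt_one (one_add_exp_pos z)]
  nlinarith [Real.exp_pos (-z)]

lemma sigmoid_mono : Monotone sigmoid := by
  intro a b hab
  unfold sigmoid
  apply one_div_le_one_div_of_le (one_add_exp_pos b)
  have := Real.exp_le_exp.mpr (neg_le_neg hab)
  linarith

lemma hasDerivAt_sigmoid (z : ℝ) :
    HasDerivAt sigmoid (Real.exp (-z) / (1 + Real.exp (-z)) ^ 2) z := by
  have h1 : HasDerivAt (fun z : ℝ => 1 + Real.exp (-z)) (Real.exp (-z) * (-1)) z := by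
    have := (Real.hasDerivAt_exp (-z)).comp z (hasDerivAt_neg z)
    simpa using this.const_add 1
  have h2 := h1.inv (ne_of_gt (one_add_exp_pos z))
  have : sigmoid = fun z : ℝ => (1 + Real.exp (-z))⁻¹ := by
    funext t; simp [sigmoid, one_div]
  rw [this]
  exact h2.congr_deriv (by ring)

lemma sigmoid_lipschitz (a b : ℝ) : |sigmoid a - sigmoid b| ≤ (1/4) * |a - b| := by
  have key := Convex.norm_image_sub_le_of_norm_hasDerivWithin_le
    (f := sigmoid) (f' := fun z => Real.exp (-z) / (1 + Real.exp (-z)) ^ 2)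
    (s := Set.univ) (C := 1/4) (fun x _ => (hasDerivAt_sigmoid x).hasDerivWithinAt)
    (fun x _ => ?_) convex_univ (Set.mem_univ b) (Set.mem_univ a)
  · simpa [Real.norm_eq_abs] using key
  · rw [Real.norm_eq_abs, abs_of_nonneg (by positivity)]
    rw [div_le_iff₀ (by positivity)]
    nlinarith [Real.exp_pos (-x), sq_nonneg (1 - Real.exp (-x))]

lemma tanh_eq_sigmoid (x : ℝ) : Real.tanh x = 2 * sigmoid (2 * x) - 1 := by
  rw [Real.tanh_eq_sinh_div_cosh, Real.sinh_eq, Real.cosh_eq, sigmoid]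
  have h1 : Real.exp (-(2 * x)) = Real.exp (-x) ^ 2 := by
    rw [← Real.exp_nat_mul]; ring_nf
  have h2 : Real.exp x = (Real.exp (-x))⁻¹ := by
    rw [← Real.exp_neg]; ring_nf
  have h3 : Real.exp (-x) > 0 := Real.exp_pos _
  rw [h1, h2]
  field_simp
  ring_nf

lemma tanh_lipschitz (a b : ℝ) : |Real.tanh a - Real.tanh b| ≤ |a - b| := by
  rw [tanh_eq_sigmoid, tanh_eq_sigmoid]
  have := sigmoid_lipschitz (2 * a) (2 * b)
  have h2 : |2 * a - 2 * b| = 2 * |a - b| := by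
    rw [show 2 * a - 2 * b = 2 * (a - b) by ring, abs_mul]; norm_num
  calc |2 * sigmoid (2*a) - 1 - (2 * sigmoid (2*b) - 1)|
      = 2 * |sigmoid (2*a) - sigmoid (2*b)| := by
        rw [show 2 * sigmoid (2*a) - 1 - (2 * sigmoid (2*b) - 1)
            = 2 * (sigmoid (2*a) - sigmoid (2*b)) by ring, abs_mul]; norm_num
    _ ≤ |a - b| := by linarith

lemma tanh_mono : Monotone Real.tanh := by
  intro a b hab
  rw [tanh_eq_sigmoid, tanh_eq_sigmoid]
  have := sigmoid_mono (by linarith : 2 * a ≤ 2 * b)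
  linarith

lemma abs_tanh_le {z M : ℝ} (h : |z| ≤ M) : |Real.tanh z| ≤ Real.tanh M := by
  rw [abs_le] at h ⊢
  constructor
  · have := tanh_mono h.1
    rw [Real.tanh_neg] at this; linarith
  · exact tanh_mono h.2

lemma tanh_nonneg' {M : ℝ} (h : 0 ≤ M) : 0 ≤ Real.tanh M := by
  have := tanh_mono h; rwa [Real.tanh_zero] at this

lemma abs_sigmoid_le {z M : ℝ} (h : |z| ≤ M) : |sigmoid z| ≤ sigmoid M := by
  rw [abs_of_pos (sigmoid_pos z)]
  exact sigmoid_mono (le_trans (le_abs_self z) h)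

variable {k a b : ℕ}

lemma enorm_nonneg' (v : Fin k → ℝ) : 0 ≤ enorm v := Real.sqrt_nonneg _

@[simp] lemma enorm_zero : enorm (0 : Fin k → ℝ) = 0 := by simp [enorm]

lemma enorm_mono {v w : Fin k → ℝ} (h : ∀ j, |v j| ≤ |w j|) : enorm v ≤ enorm w := by
  apply Real.sqrt_le_sqrt
  apply Finset.sum_le_sum
  intro j _
  calc v j ^ 2 = |v j| ^ 2 := (sq_abs _).symm
    _ ≤ |w j| ^ 2 := pow_le_pow_left₀ (abs_nonneg _) (h j) 2
    _ = w j ^ 2 := sq_abs _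

lemma enorm_const_mul (K : ℝ) (v : Fin k → ℝ) :
    enorm (fun j => K * v j) = |K| * enorm v := by
  unfold enorm
  rw [← Real.sqrt_sq_eq_abs, ← Real.sqrt_mul (sq_nonneg K)]
  congr 1
  rw [Finset.mul_sum]
  exact Finset.sum_congr rfl fun j _ => by ring

lemma enorm_eq_zero {v : Fin k → ℝ} (h : enorm v = 0) : v = 0 := by
  have hs : ∑ i, v i ^ 2 = 0 := by
    have := Real.sqrt_eq_zero (by positivity) |>.mp h
    exact this
  funext j
  have := (Finset.sum_eq_zero_iff_of_nonneg
    (fun i _ => sq_nonneg (v i))).mp hs j (Finset.mem_univ j)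
  exact pow_eq_zero_iff (by norm_num) |>.mp this

lemma enorm_add_le (v w : Fin k → ℝ) : enorm (v + w) ≤ enorm v + enorm w := by
  have hcs : ∑ j, v j * w j ≤ enorm v * enorm w := by
    have h1 := Finset.sum_mul_sq_le_sq_mul_sq Finset.univ v w
    have h2 : ∑ j, v j * w j ≤ |∑ j, v j * w j| := le_abs_self _
    have h3 : |∑ j, v j * w j| = Real.sqrt ((∑ j, v j * w j) ^ 2) :=
      (Real.sqrt_sq_eq_abs _).symm
    rw [h3] at h2
    refine h2.trans ?_
    rw [show enorm v * enorm w = Real.sqrt ((∑ j, v j ^ 2) * ∑ j, w j ^ 2) by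
      rw [Real.sqrt_mul (Finset.sum_nonneg fun j _ => sq_nonneg _)]; rfl]
    exact Real.sqrt_le_sqrt h1
  have hnn : 0 ≤ enorm v + enorm w := add_nonneg (enorm_nonneg' v) (enorm_nonneg' w)
  have hexp : ∑ j, (v + w) j ^ 2 = (∑ j, v j ^ 2) + 2 * (∑ j, v j * w j) + ∑ j, w j ^ 2 := by
    rw [Finset.mul_sum, ← Finset.sum_add_distrib, ← Finset.sum_add_distrib]
    exact Finset.sum_congr rfl fun j _ => by simp only [Pi.add_apply]; ring
  rw [enorm, hexp]
  rw [show enorm v + enorm w = Real.sqrt ((enorm v + enorm w) ^ 2) from (Real.sqrt_sq hnn).symm]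
  apply Real.sqrt_le_sqrt
  have hv : enorm v ^ 2 = ∑ j, v j ^ 2 := Real.sq_sqrt (Finset.sum_nonneg fun j _ => sq_nonneg _)
  have hw : enorm w ^ 2 = ∑ j, w j ^ 2 := Real.sq_sqrt (Finset.sum_nonneg fun j _ => sq_nonneg _)
  nlinarith

lemma enorm_neg (v : Fin k → ℝ) : enorm (-v) = enorm v := by
  unfold enorm; congr 1; exact Finset.sum_congr rfl fun j _ => by simp [neg_sq]

lemma enorm_sub_le (v w : Fin k → ℝ) : enorm (v - w) ≤ enorm v + enorm w := by
  rw [sub_eq_add_neg]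
  exact (enorm_add_le v (-w)).trans (by rw [enorm_neg])

lemma enorm_mulVec_le (M : Matrix (Fin a) (Fin b) ℝ) (v : Fin b → ℝ) :
    enorm (M.mulVec v) ≤ Real.sqrt (∑ i, ∑ j, M i j ^ 2) * enorm v := by
  rw [show Real.sqrt (∑ i, ∑ j, M i j ^ 2) * enorm v
      = Real.sqrt ((∑ i, ∑ j, M i j ^ 2) * ∑ j, v j ^ 2) by
    rw [Real.sqrt_mul (by positivity)]; rfl]
  apply Real.sqrt_le_sqrt
  rw [Finset.sum_mul]
  apply Finset.sum_le_sum
  intro i _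
  exact Finset.sum_mul_sq_le_sq_mul_sq Finset.univ (fun j => M i j) v

lemma spec_bddAbove (M : Matrix (Fin a) (Fin b) ℝ) :
    BddAbove (Set.range fun v : {v : Fin b → ℝ // enorm v ≤ 1} => enorm (M.mulVec v.1)) := by
  refine ⟨Real.sqrt (∑ i, ∑ j, M i j ^ 2), ?_⟩
  rintro _ ⟨x, rfl⟩
  refine (enorm_mulVec_le M x.1).trans ?_
  have h := x.2
  have hF : 0 ≤ Real.sqrt (∑ i, ∑ j, M i j ^ 2) := Real.sqrt_nonneg _
  nlinarith [enorm_nonneg' x.1]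

lemma spec_nonneg (M : Matrix (Fin a) (Fin b) ℝ) : 0 ≤ spec M := by
  have := le_ciSup (spec_bddAbove M) ⟨0, by simp⟩
  refine le_trans ?_ this
  exact enorm_nonneg' _

lemma enorm_mulVec_le_spec (M : Matrix (Fin a) (Fin b) ℝ) (v : Fin b → ℝ) :
    enorm (M.mulVec v) ≤ spec M * enorm v := by
  by_cases hv : enorm v = 0
  · rw [enorm_eq_zero hv]
    simp [hv, Matrix.mulVec_zero]
  · have hN : 0 < enorm v := lt_of_le_of_ne (enorm_nonneg' v) (Ne.symm hv)
    set N := enorm v with hNdef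
    have hw : enorm (fun j => N⁻¹ * v j) = 1 := by
      rw [enorm_const_mul, abs_of_pos (inv_pos.mpr hN)]
      field_simp
      exact hNdef.symm
    have key : enorm (M.mulVec fun j => N⁻¹ * v j) ≤ spec M :=
      le_ciSup (spec_bddAbove M) ⟨fun j => N⁻¹ * v j, le_of_eq hw⟩
    have hmv : M.mulVec (fun j => N⁻¹ * v j) = fun i => N⁻¹ * M.mulVec v i := by
      funext i
      simp [Matrix.mulVec, dotProduct, Finset.mul_sum]
      exact Finset.sum_congr rfl fun j _ => by ring
    rw [hmv, enorm_const_mul, abs_of_pos (inv_pos.mpr hN)] at key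
    calc enorm (M.mulVec v) = N * (N⁻¹ * enorm (M.mulVec v)) := by field_simp
      _ ≤ N * spec M := by nlinarith
      _ = spec M * N := by ring

lemma abs_le_of_vinf {v : Fin k → ℝ} {K : ℝ} (h : vinf v ≤ K) (j : Fin k) : |v j| ≤ K :=
  le_trans (le_ciSup (f := fun i => |v i|) (Set.Finite.bddAbove (Set.finite_range _)) j) h

lemma abs_sub_clamp {x v dmax : ℝ} (hx : |x| ≤ dmax) :
    |x - min (max v (-dmax)) dmax| ≤ |x - v| := by
  rw [abs_le] at hx
  have hxc : x = min (max x (-dmax)) dmax := by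
    rw [max_eq_left (by linarith), min_eq_left (by linarith)]
  calc |x - min (max v (-dmax)) dmax|
      = |min (max x (-dmax)) dmax - min (max v (-dmax)) dmax| := by rw [← hxc]
    _ ≤ max |max x (-dmax) - max v (-dmax)| |dmax - dmax| := abs_min_sub_min_le_max _ _ _ _
    _ ≤ |x - v| := by
        rw [sub_self, abs_zero]
        exact max_le (abs_max_sub_max_le_abs _ _ _) (abs_nonneg _)

lemma rowNorm3_nonneg {n m : ℕ} (s : ℝ) (A : Matrix (Fin n) (Fin m) ℝ)
    (B : Matrix (Fin n) (Fin n) ℝ) (v : Fin n → ℝ) : 0 ≤ rowNorm3 s A B v := by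
  rcases isEmpty_or_nonempty (Fin n) with hn | hn
  · rw [rowNorm3, Real.iSup_of_isEmpty]
  · obtain ⟨i⟩ := hn
    refine le_trans ?_ (le_ciSup (f := fun i => ∑ j, |s * A i j| + ∑ j, |B i j| + |v i|)
      (Set.Finite.bddAbove (Set.finite_range _)) i)
    positivity

lemma arg3_bound {n m : ℕ} {umax : ℝ} (hu : 0 < umax)
    (W : Matrix (Fin n) (Fin m) ℝ) (U : Matrix (Fin n) (Fin n) ℝ) (b : Fin n → ℝ)
    {u : Fin m → ℝ} {h : Fin n → ℝ} (hu' : ∀ j, |u j| ≤ umax) (hh : ∀ j, |h j| ≤ 1)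
    (i : Fin n) : |(W.mulVec u + U.mulVec h + b) i| ≤ rowNorm3 umax W U b := by
  have h1 : |W.mulVec u i| ≤ ∑ j, |umax * W i j| := by
    simp only [Matrix.mulVec, dotProduct]
    refine (Finset.abs_sum_le_sum_abs _ _).trans (Finset.sum_le_sum fun j _ => ?_)
    rw [abs_mul, abs_mul, abs_of_pos hu]
    calc |W i j| * |u j| ≤ |W i j| * umax := mul_le_mul_of_nonneg_left (hu' j) (abs_nonneg _)
      _ = umax * |W i j| := mul_comm _ _
  have h2 : |U.mulVec h i| ≤ ∑ j, |U i j| := by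
    simp only [Matrix.mulVec, dotProduct]
    refine (Finset.abs_sum_le_sum_abs _ _).trans (Finset.sum_le_sum fun j _ => ?_)
    rw [abs_mul]
    exact (mul_le_mul_of_nonneg_left (hh j) (abs_nonneg _)).trans (by rw [mul_one])
  refine le_trans ?_ (le_ciSup (f := fun i => ∑ j, |umax * W i j| + ∑ j, |U i j| + |b i|)
    (Set.Finite.bddAbove (Set.finite_range _)) i)
  calc |(W.mulVec u + U.mulVec h + b) i| ≤ |W.mulVec u i + U.mulVec h i| + |b i| := by
        simp only [Pi.add_apply]; exact abs_add_le _ _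
    _ ≤ |W.mulVec u i| + |U.mulVec h i| + |b i| := add_le_add_left (abs_add_le _ _) _
    _ ≤ ∑ j, |umax * W i j| + ∑ j, |U i j| + |b i| := by linarith

lemma arg5_bound {n m p : ℕ} {umax t : ℝ} (hu : 0 < umax) (ht : 0 < t)
    (W : Matrix (Fin n) (Fin m) ℝ) (B : Matrix (Fin n) (Fin n) ℝ) (v : Fin n → ℝ)
    (C : Matrix (Fin n) (Fin n) ℝ) (D : Matrix (Fin n) (Fin p) ℝ)
    {u : Fin m → ℝ} {h1 h2 : Fin n → ℝ} {e : Fin p → ℝ}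
    (hu' : ∀ j, |u j| ≤ umax) (hh1 : ∀ j, |h1 j| ≤ 1) (hh2 : ∀ j, |h2 j| ≤ 1)
    (he : ∀ j, |e j| ≤ t) (i : Fin n) :
    |(W.mulVec u + B.mulVec h1 + v + C.mulVec h2 + D.mulVec e) i| ≤
      rowNorm5 umax W B v C t D := by
  have b1 : |W.mulVec u i| ≤ ∑ j, |umax * W i j| := by
    simp only [Matrix.mulVec, dotProduct]
    refine (Finset.abs_sum_le_sum_abs _ _).trans (Finset.sum_le_sum fun j _ => ?_)
    rw [abs_mul, abs_mul, abs_of_pos hu]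
    calc |W i j| * |u j| ≤ |W i j| * umax := mul_le_mul_of_nonneg_left (hu' j) (abs_nonneg _)
      _ = umax * |W i j| := mul_comm _ _
  have b2 : |B.mulVec h1 i| ≤ ∑ j, |B i j| := by
    simp only [Matrix.mulVec, dotProduct]
    refine (Finset.abs_sum_le_sum_abs _ _).trans (Finset.sum_le_sum fun j _ => ?_)
    rw [abs_mul]
    exact (mul_le_mul_of_nonneg_left (hh1 j) (abs_nonneg _)).trans (by rw [mul_one])
  have b3 : |C.mulVec h2 i| ≤ ∑ j, |C i j| := by
    simp only [Matrix.mulVec, dotProduct]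
    refine (Finset.abs_sum_le_sum_abs _ _).trans (Finset.sum_le_sum fun j _ => ?_)
    rw [abs_mul]
    exact (mul_le_mul_of_nonneg_left (hh2 j) (abs_nonneg _)).trans (by rw [mul_one])
  have b4 : |D.mulVec e i| ≤ ∑ j, |t * D i j| := by
    simp only [Matrix.mulVec, dotProduct]
    refine (Finset.abs_sum_le_sum_abs _ _).trans (Finset.sum_le_sum fun j _ => ?_)
    rw [abs_mul, abs_mul, abs_of_pos ht]
    calc |D i j| * |e j| ≤ |D i j| * t := mul_le_mul_of_nonneg_left (he j) (abs_nonneg _)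
      _ = t * |D i j| := mul_comm _ _
  refine le_trans ?_ (le_ciSup
    (f := fun i => ∑ j, |umax * W i j| + ∑ j, |B i j| + |v i| + ∑ j, |C i j| + ∑ j, |t * D i j|)
    (Set.Finite.bddAbove (Set.finite_range _)) i)
  calc |(W.mulVec u + B.mulVec h1 + v + C.mulVec h2 + D.mulVec e) i|
      ≤ |W.mulVec u i + B.mulVec h1 i + v i + C.mulVec h2 i| + |D.mulVec e i| := by
        simp only [Pi.add_apply]; exact abs_add_le _ _
    _ ≤ |W.mulVec u i + B.mulVec h1 i + v i| + |C.mulVec h2 i| + |D.mulVec e i| :=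
        add_le_add_left (abs_add_le _ _) _
    _ ≤ |W.mulVec u i + B.mulVec h1 i| + |v i| + |C.mulVec h2 i| + |D.mulVec e i| := by
        have := abs_add_le (W.mulVec u i + B.mulVec h1 i) (v i); linarith
    _ ≤ |W.mulVec u i| + |B.mulVec h1 i| + |v i| + |C.mulVec h2 i| + |D.mulVec e i| := by
        have := abs_add_le (W.mulVec u i) (B.mulVec h1 i); linarith
    _ ≤ ∑ j, |umax * W i j| + ∑ j, |B i j| + |v i| + ∑ j, |C i j| + ∑ j, |t * D i j| := by
        linarith

lemma gateC_bound {n : ℕ} (zf zfh zi zih zc zch c ch : Fin n → ℝ)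
    (sF sI sC cb K1 K2 K3 : ℝ)
    (hsF : ∀ j, |sigmoid (zfh j)| ≤ sF) (hsFnn : 0 ≤ sF)
    (hc : ∀ j, |c j| ≤ cb) (hcb : 0 ≤ cb)
    (hsI : ∀ j, |sigmoid (zi j)| ≤ sI) (hsInn : 0 ≤ sI)
    (htc : ∀ j, |Real.tanh (zch j)| ≤ sC) (hsCnn : 0 ≤ sC)
    (hdf : enorm (zf - zfh) ≤ K1) (hdi : enorm (zi - zih) ≤ K2)
    (hdc : enorm (zc - zch) ≤ K3) :
    enorm ((fun j => sigmoid (zf j) * c j + sigmoid (zi j) * Real.tanh (zc j)) -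
           (fun j => sigmoid (zfh j) * ch j + sigmoid (zih j) * Real.tanh (zch j))) ≤
      sF * enorm (c - ch) + 1/4 * cb * K1 + sI * K3 + 1/4 * sC * K2 := by
  have hK1 : 0 ≤ K1 := le_trans (Real.sqrt_nonneg _) hdf
  have hK2 : 0 ≤ K2 := le_trans (Real.sqrt_nonneg _) hdi
  have hK3 : 0 ≤ K3 := le_trans (Real.sqrt_nonneg _) hdc
  have hsplit : (fun j => sigmoid (zf j) * c j + sigmoid (zi j) * Real.tanh (zc j)) -
           (fun j => sigmoid (zfh j) * ch j + sigmoid (zih j) * Real.tanh (zch j))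
      = (fun j => sigmoid (zfh j) * (c j - ch j))
        + (fun j => (sigmoid (zf j) - sigmoid (zfh j)) * c j)
        + (fun j => sigmoid (zi j) * (Real.tanh (zc j) - Real.tanh (zch j)))
        + (fun j => (sigmoid (zi j) - sigmoid (zih j)) * Real.tanh (zch j)) := by
    funext j; simp only [Pi.sub_apply, Pi.add_apply]; ring
  rw [hsplit]
  set A1 : Fin n → ℝ := fun j => sigmoid (zfh j) * (c j - ch j) with hA1
  set A2 : Fin n → ℝ := fun j => (sigmoid (zf j) - sigmoid (zfh j)) * c j with hA2
  set A3 : Fin n → ℝ := fun j => sigmoid (zi j) * (Real.tanh (zc j) - Real.tanh (zch j)) with hA3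
  set A4 : Fin n → ℝ := fun j => (sigmoid (zi j) - sigmoid (zih j)) * Real.tanh (zch j) with hA4
  have e1 : enorm A1 ≤ sF * enorm (c - ch) := by
    have hm : ∀ j, |A1 j| ≤ |sF * (c - ch) j| := fun j => by
      rw [hA1]; simp only [Pi.sub_apply]
      rw [abs_mul, abs_mul, abs_of_nonneg hsFnn]
      exact mul_le_mul_of_nonneg_right (hsF j) (abs_nonneg _)
    calc enorm A1 ≤ enorm (fun j => sF * (c - ch) j) := enorm_mono hm
      _ = |sF| * enorm (c - ch) := enorm_const_mul _ _
      _ = sF * enorm (c - ch) := by rw [abs_of_nonneg hsFnn]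
  have e2 : enorm A2 ≤ 1/4 * cb * K1 := by
    have hm : ∀ j, |A2 j| ≤ |(1/4 * cb) * (zf - zfh) j| := fun j => by
      rw [hA2]; simp only [Pi.sub_apply]
      rw [abs_mul, abs_mul, abs_of_nonneg (by linarith : (0:ℝ) ≤ 1/4 * cb)]
      have h1 := sigmoid_lipschitz (zf j) (zfh j)
      have h2 := hc j
      nlinarith [abs_nonneg (sigmoid (zf j) - sigmoid (zfh j)), abs_nonneg (zf j - zfh j),
        abs_nonneg (c j)]
    calc enorm A2 ≤ enorm (fun j => (1/4 * cb) * (zf - zfh) j) := enorm_mono hm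
      _ = |1/4 * cb| * enorm (zf - zfh) := enorm_const_mul _ _
      _ ≤ 1/4 * cb * K1 := by
          rw [abs_of_nonneg (by linarith : (0:ℝ) ≤ 1/4 * cb)]
          exact mul_le_mul_of_nonneg_left hdf (by linarith)
  have e3 : enorm A3 ≤ sI * K3 := by
    have hm : ∀ j, |A3 j| ≤ |sI * (zc - zch) j| := fun j => by
      rw [hA3]; simp only [Pi.sub_apply]
      rw [abs_mul, abs_mul, abs_of_nonneg hsInn]
      exact mul_le_mul (hsI j) (tanh_lipschitz _ _) (abs_nonneg _) hsInn
    calc enorm A3 ≤ enorm (fun j => sI * (zc - zch) j) := enorm_mono hm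
      _ = |sI| * enorm (zc - zch) := enorm_const_mul _ _
      _ ≤ sI * K3 := by
          rw [abs_of_nonneg hsInn]; exact mul_le_mul_of_nonneg_left hdc hsInn
  have e4 : enorm A4 ≤ 1/4 * sC * K2 := by
    have hm : ∀ j, |A4 j| ≤ |(1/4 * sC) * (zi - zih) j| := fun j => by
      rw [hA4]; simp only [Pi.sub_apply]
      rw [abs_mul, abs_mul, abs_of_nonneg (by linarith : (0:ℝ) ≤ 1/4 * sC)]
      have h1 := sigmoid_lipschitz (zi j) (zih j)
      have h2 := htc j
      nlinarith [abs_nonneg (sigmoid (zi j) - sigmoid (zih j)), abs_nonneg (zi j - zih j),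
        abs_nonneg (Real.tanh (zch j))]
    calc enorm A4 ≤ enorm (fun j => (1/4 * sC) * (zi - zih) j) := enorm_mono hm
      _ = |1/4 * sC| * enorm (zi - zih) := enorm_const_mul _ _
      _ ≤ 1/4 * sC * K2 := by
          rw [abs_of_nonneg (by linarith : (0:ℝ) ≤ 1/4 * sC)]
          exact mul_le_mul_of_nonneg_left hdi (by linarith)
  have t1 := enorm_add_le (A1 + A2 + A3) A4
  have t2 := enorm_add_le (A1 + A2) A3
  have t3 := enorm_add_le A1 A2
  linarith

lemma gateH_bound {n : ℕ} (zo zoh cc cch : Fin n → ℝ) (sO sX K R : ℝ)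
    (hsO : ∀ j, |sigmoid (zoh j)| ≤ sO) (hsOnn : 0 ≤ sO)
    (htc : ∀ j, |Real.tanh (cc j)| ≤ sX) (hsXnn : 0 ≤ sX)
    (hK : enorm (zo - zoh) ≤ K) (hR : enorm (cc - cch) ≤ R) :
    enorm ((fun j => sigmoid (zo j) * Real.tanh (cc j)) -
           (fun j => sigmoid (zoh j) * Real.tanh (cch j))) ≤
      sO * R + 1/4 * sX * K := by
  have hK0 : 0 ≤ K := le_trans (Real.sqrt_nonneg _) hK
  have hsplit : (fun j => sigmoid (zo j) * Real.tanh (cc j)) -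
           (fun j => sigmoid (zoh j) * Real.tanh (cch j))
      = (fun j => sigmoid (zoh j) * (Real.tanh (cc j) - Real.tanh (cch j)))
        + (fun j => (sigmoid (zo j) - sigmoid (zoh j)) * Real.tanh (cc j)) := by
    funext j; simp only [Pi.sub_apply, Pi.add_apply]; ring
  rw [hsplit]
  set B1 : Fin n → ℝ := fun j => sigmoid (zoh j) * (Real.tanh (cc j) - Real.tanh (cch j)) with hB1
  set B2 : Fin n → ℝ := fun j => (sigmoid (zo j) - sigmoid (zoh j)) * Real.tanh (cc j) with hB2
  have e1 : enorm B1 ≤ sO * R := by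
    have hm : ∀ j, |B1 j| ≤ |sO * (cc - cch) j| := fun j => by
      rw [hB1]; simp only [Pi.sub_apply]
      rw [abs_mul, abs_mul, abs_of_nonneg hsOnn]
      exact mul_le_mul (hsO j) (tanh_lipschitz _ _) (abs_nonneg _) hsOnn
    calc enorm B1 ≤ enorm (fun j => sO * (cc - cch) j) := enorm_mono hm
      _ = |sO| * enorm (cc - cch) := enorm_const_mul _ _
      _ ≤ sO * R := by rw [abs_of_nonneg hsOnn]; exact mul_le_mul_of_nonneg_left hR hsOnn
  have e2 : enorm B2 ≤ 1/4 * sX * K := by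
    have hm : ∀ j, |B2 j| ≤ |(1/4 * sX) * (zo - zoh) j| := fun j => by
      rw [hB2]; simp only [Pi.sub_apply]
      rw [abs_mul, abs_mul, abs_of_nonneg (by linarith : (0:ℝ) ≤ 1/4 * sX)]
      have h1 := sigmoid_lipschitz (zo j) (zoh j)
      have h2 := htc j
      nlinarith [abs_nonneg (sigmoid (zo j) - sigmoid (zoh j)), abs_nonneg (zo j - zoh j),
        abs_nonneg (Real.tanh (cc j))]
    calc enorm B2 ≤ enorm (fun j => (1/4 * sX) * (zo - zoh) j) := enorm_mono hm
      _ = |1/4 * sX| * enorm (zo - zoh) := enorm_const_mul _ _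
      _ ≤ 1/4 * sX * K := by
          rw [abs_of_nonneg (by linarith : (0:ℝ) ≤ 1/4 * sX)]
          exact mul_le_mul_of_nonneg_left hK (by linarith)
  have t1 := enorm_add_le B1 B2
  linarith

end AuxLemmas

/-- one-step bound for the observer estimation error (eq. (24)). -/
theorem statement8 {n m p : ℕ} (S : LSTM n m p) (G : Gains n p) (umax dmax : ℝ)
    (hu : 0 < umax) (hd : 0 < dmax)
    (u : Fin m → ℝ) (huU : u ∈ setU m umax)
    (c h : Fin n → ℝ) (hx : (c, h) ∈ setX S umax)
    (d : Fin p → ℝ) (hdD : d ∈ setD p dmax)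
    (w : Fin p → ℝ) (hdw : d + w ∈ setD p dmax)
    (ch hh : Fin n → ℝ) (dh : Fin p → ℝ) (hchi : (ch, hh, dh) ∈ setIhat S G umax dmax)
    (y : Fin p → ℝ) (hy : y = S.Wy.mulVec h + S.bY + d) :
    ∀ i : Fin 3,
      ![enorm (stepC S u c h - obsC S G u y ch hh dh),
        enorm (stepH S u c h - obsH S G u y ch hh dh),
        enorm ((d + w) - obsD S G dmax y hh dh)] i ≤
      (Ad S G umax dmax).mulVec ![enorm (c - ch), enorm (h - hh), enorm (d - dh)] i +
        ![(0 : ℝ), 0, 1] i * enorm w := by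
  -- pointwise bounds from the ∞-norm memberships
  have hcj : ∀ j, |c j| ≤ sIb S umax * sCb S umax / (1 - sFb S umax) := abs_le_of_vinf hx.1
  have hhj : ∀ j, |h j| ≤ 1 := abs_le_of_vinf hx.2
  have huj : ∀ j, |u j| ≤ umax := abs_le_of_vinf huU
  have hhhj : ∀ j, |hh j| ≤ 1 := abs_le_of_vinf hchi.2.1
  have hdj : ∀ j, |d j| ≤ dmax := abs_le_of_vinf hdD
  have hdhj : ∀ j, |dh j| ≤ dmax := abs_le_of_vinf hchi.2.2
  have hdwj : ∀ j, |(d + w) j| ≤ dmax := abs_le_of_vinf hdw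
  have hedj : ∀ j, |(d - dh) j| ≤ 2 * dmax := fun j => by
    simp only [Pi.sub_apply]
    have h1 := hdj j; have h2 := hdhj j
    rw [sub_eq_add_neg]
    refine (abs_add_le _ _).trans ?_
    rw [abs_neg]; linarith
  -- constants
  have hsFlt : sFb S umax < 1 := sigmoid_lt_one _
  have h1mF : 0 < 1 - sFb S umax := by linarith
  have hsIpos : (0:ℝ) < sIb S umax := sigmoid_pos _
  have hsCnn : (0:ℝ) ≤ sCb S umax := tanh_nonneg' (rowNorm3_nonneg _ _ _ _)
  have hcbnn : (0:ℝ) ≤ sIb S umax * sCb S umax / (1 - sFb S umax) :=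
    div_nonneg (mul_nonneg hsIpos.le hsCnn) h1mF.le
  have hsXnn : (0:ℝ) ≤ sXb S umax := tanh_nonneg' hcbnn
  have hsFhnn : (0:ℝ) ≤ sFh S G umax dmax := (sigmoid_pos _).le
  have hsOhnn : (0:ℝ) ≤ sOh S G umax dmax := (sigmoid_pos _).le
  have htd : (0:ℝ) < 2 * dmax := by linarith
  -- innovation identity
  have hyb : y - yhat S hh dh = S.Wy.mulVec (h - hh) + (d - dh) := by
    rw [hy]; unfold yhat
    funext j
    simp only [Pi.add_apply, Pi.sub_apply, Matrix.mulVec_sub]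
    ring
  -- plant gate argument bounds
  have hsfj : ∀ j, |sigmoid ((S.Wf.mulVec u + S.Uf.mulVec h + S.bf) j)| ≤ sFb S umax :=
    fun j => abs_sigmoid_le (arg3_bound hu _ _ _ huj hhj j)
  have hsij : ∀ j, |sigmoid ((S.Wi.mulVec u + S.Ui.mulVec h + S.bi) j)| ≤ sIb S umax :=
    fun j => abs_sigmoid_le (arg3_bound hu _ _ _ huj hhj j)
  have htcj : ∀ j, |Real.tanh ((S.Wc.mulVec u + S.Uc.mulVec h + S.bc) j)| ≤ sCb S umax :=
    fun j => abs_tanh_le (arg3_bound hu _ _ _ huj hhj j)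
  have htchj : ∀ j, |Real.tanh ((S.Wc.mulVec u + S.Uc.mulVec hh + S.bc) j)| ≤ sCb S umax :=
    fun j => abs_tanh_le (arg3_bound hu _ _ _ huj hhhj j)
  -- observer gate argument rewriting and bounds
  have hargf : S.Wf.mulVec u + S.Uf.mulVec hh + S.bf + G.Lf.mulVec (y - yhat S hh dh)
      = S.Wf.mulVec u + (S.Uf - G.Lf * S.Wy).mulVec hh + S.bf
        + (G.Lf * S.Wy).mulVec h + G.Lf.mulVec (d - dh) := by
    rw [hyb]; funext j
    simp only [Pi.add_apply, Pi.sub_apply, Matrix.sub_mulVec, Matrix.mulVec_add,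
      Matrix.mulVec_sub, ← Matrix.mulVec_mulVec]
    ring
  have hargi : S.Wi.mulVec u + S.Ui.mulVec hh + S.bi + G.Li.mulVec (y - yhat S hh dh)
      = S.Wi.mulVec u + (S.Ui - G.Li * S.Wy).mulVec hh + S.bi
        + (G.Li * S.Wy).mulVec h + G.Li.mulVec (d - dh) := by
    rw [hyb]; funext j
    simp only [Pi.add_apply, Pi.sub_apply, Matrix.sub_mulVec, Matrix.mulVec_add,
      Matrix.mulVec_sub, ← Matrix.mulVec_mulVec]
    ring
  have hargo : S.Wo.mulVec u + S.Uo.mulVec hh + S.bo + G.Lo.mulVec (y - yhat S hh dh)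
      = S.Wo.mulVec u + (S.Uo - G.Lo * S.Wy).mulVec hh + S.bo
        + (G.Lo * S.Wy).mulVec h + G.Lo.mulVec (d - dh) := by
    rw [hyb]; funext j
    simp only [Pi.add_apply, Pi.sub_apply, Matrix.sub_mulVec, Matrix.mulVec_add,
      Matrix.mulVec_sub, ← Matrix.mulVec_mulVec]
    ring
  have hsfhj : ∀ j, |sigmoid ((S.Wf.mulVec u + S.Uf.mulVec hh + S.bf
      + G.Lf.mulVec (y - yhat S hh dh)) j)| ≤ sFh S G umax dmax := fun j => by
    rw [hargf]
    exact abs_sigmoid_le (arg5_bound hu htd _ _ _ _ _ huj hhhj hhj hedj j)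
  have hsihj : ∀ j, |sigmoid ((S.Wi.mulVec u + S.Ui.mulVec hh + S.bi
      + G.Li.mulVec (y - yhat S hh dh)) j)| ≤ sIh S G umax dmax := fun j => by
    rw [hargi]
    exact abs_sigmoid_le (arg5_bound hu htd _ _ _ _ _ huj hhhj hhj hedj j)
  have hsohj : ∀ j, |sigmoid ((S.Wo.mulVec u + S.Uo.mulVec hh + S.bo
      + G.Lo.mulVec (y - yhat S hh dh)) j)| ≤ sOh S G umax dmax := fun j => by
    rw [hargo]
    exact abs_sigmoid_le (arg5_bound hu htd _ _ _ _ _ huj hhhj hhj hedj j)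
  -- difference identities for gate arguments
  have hdfv : (S.Wf.mulVec u + S.Uf.mulVec h + S.bf)
      - (S.Wf.mulVec u + S.Uf.mulVec hh + S.bf + G.Lf.mulVec (y - yhat S hh dh))
      = (S.Uf - G.Lf * S.Wy).mulVec (h - hh) - G.Lf.mulVec (d - dh) := by
    rw [hyb]; funext j
    simp only [Pi.add_apply, Pi.sub_apply, Matrix.sub_mulVec, Matrix.mulVec_add,
      Matrix.mulVec_sub, ← Matrix.mulVec_mulVec]
    ring
  have hdiv : (S.Wi.mulVec u + S.Ui.mulVec h + S.bi)
      - (S.Wi.mulVec u + S.Ui.mulVec hh + S.bi + G.Li.mulVec (y - yhat S hh dh))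
      = (S.Ui - G.Li * S.Wy).mulVec (h - hh) - G.Li.mulVec (d - dh) := by
    rw [hyb]; funext j
    simp only [Pi.add_apply, Pi.sub_apply, Matrix.sub_mulVec, Matrix.mulVec_add,
      Matrix.mulVec_sub, ← Matrix.mulVec_mulVec]
    ring
  have hdov : (S.Wo.mulVec u + S.Uo.mulVec h + S.bo)
      - (S.Wo.mulVec u + S.Uo.mulVec hh + S.bo + G.Lo.mulVec (y - yhat S hh dh))
      = (S.Uo - G.Lo * S.Wy).mulVec (h - hh) - G.Lo.mulVec (d - dh) := by
    rw [hyb]; funext j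
    simp only [Pi.add_apply, Pi.sub_apply, Matrix.sub_mulVec, Matrix.mulVec_add,
      Matrix.mulVec_sub, ← Matrix.mulVec_mulVec]
    ring
  have hdcv : (S.Wc.mulVec u + S.Uc.mulVec h + S.bc)
      - (S.Wc.mulVec u + S.Uc.mulVec hh + S.bc) = S.Uc.mulVec (h - hh) := by
    funext j
    simp only [Pi.add_apply, Pi.sub_apply, Matrix.mulVec_sub]
    ring
  have hK1 : enorm ((S.Wf.mulVec u + S.Uf.mulVec h + S.bf)
      - (S.Wf.mulVec u + S.Uf.mulVec hh + S.bf + G.Lf.mulVec (y - yhat S hh dh)))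
      ≤ spec (S.Uf - G.Lf * S.Wy) * enorm (h - hh) + spec G.Lf * enorm (d - dh) := by
    rw [hdfv]
    exact (enorm_sub_le _ _).trans
      (add_le_add (enorm_mulVec_le_spec _ _) (enorm_mulVec_le_spec _ _))
  have hK2 : enorm ((S.Wi.mulVec u + S.Ui.mulVec h + S.bi)
      - (S.Wi.mulVec u + S.Ui.mulVec hh + S.bi + G.Li.mulVec (y - yhat S hh dh)))
      ≤ spec (S.Ui - G.Li * S.Wy) * enorm (h - hh) + spec G.Li * enorm (d - dh) := by
    rw [hdiv]
    exact (enorm_sub_le _ _).trans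
      (add_le_add (enorm_mulVec_le_spec _ _) (enorm_mulVec_le_spec _ _))
  have hKo : enorm ((S.Wo.mulVec u + S.Uo.mulVec h + S.bo)
      - (S.Wo.mulVec u + S.Uo.mulVec hh + S.bo + G.Lo.mulVec (y - yhat S hh dh)))
      ≤ spec (S.Uo - G.Lo * S.Wy) * enorm (h - hh) + spec G.Lo * enorm (d - dh) := by
    rw [hdov]
    exact (enorm_sub_le _ _).trans
      (add_le_add (enorm_mulVec_le_spec _ _) (enorm_mulVec_le_spec _ _))
  have hK3 : enorm ((S.Wc.mulVec u + S.Uc.mulVec h + S.bc)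
      - (S.Wc.mulVec u + S.Uc.mulVec hh + S.bc)) ≤ spec S.Uc * enorm (h - hh) := by
    rw [hdcv]; exact enorm_mulVec_le_spec _ _
  -- Row 0
  have hrow0 : enorm (stepC S u c h - obsC S G u y ch hh dh) ≤
      sFh S G umax dmax * enorm (c - ch) + alphaH S G umax * enorm (h - hh)
        + betaH S G umax * enorm (d - dh) := by
    have hb : enorm (stepC S u c h - obsC S G u y ch hh dh) ≤
        sFh S G umax dmax * enorm (c - ch)
        + 1/4 * (sIb S umax * sCb S umax / (1 - sFb S umax))
            * (spec (S.Uf - G.Lf * S.Wy) * enorm (h - hh) + spec G.Lf * enorm (d - dh))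
        + sIb S umax * (spec S.Uc * enorm (h - hh))
        + 1/4 * sCb S umax
            * (spec (S.Ui - G.Li * S.Wy) * enorm (h - hh) + spec G.Li * enorm (d - dh)) :=
      gateC_bound _ _ _ _ _ _ c ch _ _ _ _ _ _ _
        hsfhj hsFhnn hcj hcbnn hsij hsIpos.le htchj hsCnn hK1 hK2 hK3
    have heq : sFh S G umax dmax * enorm (c - ch) + alphaH S G umax * enorm (h - hh)
        + betaH S G umax * enorm (d - dh)
        = sFh S G umax dmax * enorm (c - ch)
        + 1/4 * (sIb S umax * sCb S umax / (1 - sFb S umax))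
            * (spec (S.Uf - G.Lf * S.Wy) * enorm (h - hh) + spec G.Lf * enorm (d - dh))
        + sIb S umax * (spec S.Uc * enorm (h - hh))
        + 1/4 * sCb S umax
            * (spec (S.Ui - G.Li * S.Wy) * enorm (h - hh) + spec G.Li * enorm (d - dh)) := by
      simp only [alphaH, betaH]; ring
    linarith
  -- bound on the plant cell state and its tanh
  have hstepCb : ∀ j, |stepC S u c h j| ≤ sIb S umax * sCb S umax / (1 - sFb S umax) := by
    intro j
    have h1 := hsfj j
    have h2 := hsij j
    have h3 := htcj j
    have h4 := hcj j
    have hkey : sFb S umax * (sIb S umax * sCb S umax / (1 - sFb S umax))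
        + sIb S umax * sCb S umax = sIb S umax * sCb S umax / (1 - sFb S umax) := by
      field_simp
      ring
    have hsFnn : (0:ℝ) ≤ sFb S umax := (sigmoid_pos _).le
    calc |stepC S u c h j|
        ≤ |sigmoid ((S.Wf.mulVec u + S.Uf.mulVec h + S.bf) j)| * |c j|
          + |sigmoid ((S.Wi.mulVec u + S.Ui.mulVec h + S.bi) j)|
            * |Real.tanh ((S.Wc.mulVec u + S.Uc.mulVec h + S.bc) j)| := by
          refine (abs_add_le _ _).trans (le_of_eq ?_)
          rw [abs_mul, abs_mul]
      _ ≤ sFb S umax * (sIb S umax * sCb S umax / (1 - sFb S umax))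
          + sIb S umax * sCb S umax :=
          add_le_add (mul_le_mul h1 h4 (abs_nonneg _) hsFnn)
            (mul_le_mul h2 h3 (abs_nonneg _) hsIpos.le)
      _ = sIb S umax * sCb S umax / (1 - sFb S umax) := hkey
  have htstep : ∀ j, |Real.tanh (stepC S u c h j)| ≤ sXb S umax :=
    fun j => abs_tanh_le (hstepCb j)
  -- Row 1
  have hrow1 : enorm (stepH S u c h - obsH S G u y ch hh dh) ≤
      sOh S G umax dmax * sFh S G umax dmax * enorm (c - ch)
      + gammaH S G umax dmax * enorm (h - hh)
      + (sOh S G umax dmax * betaH S G umax + 1/4 * sXb S umax * spec G.Lo)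
          * enorm (d - dh) := by
    have hb : enorm (stepH S u c h - obsH S G u y ch hh dh) ≤
        sOh S G umax dmax * (sFh S G umax dmax * enorm (c - ch)
          + alphaH S G umax * enorm (h - hh) + betaH S G umax * enorm (d - dh))
        + 1/4 * sXb S umax
            * (spec (S.Uo - G.Lo * S.Wy) * enorm (h - hh) + spec G.Lo * enorm (d - dh)) :=
      gateH_bound _ _ (stepC S u c h) (obsC S G u y ch hh dh) _ _ _ _
        hsohj hsOhnn htstep hsXnn hKo hrow0
    have heq : sOh S G umax dmax * sFh S G umax dmax * enorm (c - ch)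
        + gammaH S G umax dmax * enorm (h - hh)
        + (sOh S G umax dmax * betaH S G umax + 1/4 * sXb S umax * spec G.Lo)
            * enorm (d - dh)
        = sOh S G umax dmax * (sFh S G umax dmax * enorm (c - ch)
          + alphaH S G umax * enorm (h - hh) + betaH S G umax * enorm (d - dh))
        + 1/4 * sXb S umax
            * (spec (S.Uo - G.Lo * S.Wy) * enorm (h - hh) + spec G.Lo * enorm (d - dh)) := by
      simp only [gammaH]; ring
    linarith
  -- Row 2
  have hpre : (d + w) - (dh + G.Ld.mulVec (y - yhat S hh dh))
      = ((1 : Matrix (Fin p) (Fin p) ℝ) - G.Ld).mulVec (d - dh)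
        - (G.Ld * S.Wy).mulVec (h - hh) + w := by
    rw [hyb]; funext j
    simp only [Pi.add_apply, Pi.sub_apply, Matrix.sub_mulVec, Matrix.mulVec_add,
      Matrix.mulVec_sub, Matrix.one_mulVec, ← Matrix.mulVec_mulVec]
    ring
  have hcl : ∀ j, |((d + w) - obsD S G dmax y hh dh) j|
      ≤ |((d + w) - (dh + G.Ld.mulVec (y - yhat S hh dh))) j| := by
    intro j
    simp only [Pi.sub_apply, Pi.add_apply, obsD, sat]
    exact abs_sub_clamp (by simpa using hdwj j)
  have hrow2 : enorm ((d + w) - obsD S G dmax y hh dh) ≤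
      spec (G.Ld * S.Wy) * enorm (h - hh)
      + spec ((1 : Matrix (Fin p) (Fin p) ℝ) - G.Ld) * enorm (d - dh) + enorm w := by
    have s1 : enorm ((d + w) - obsD S G dmax y hh dh)
        ≤ enorm ((d + w) - (dh + G.Ld.mulVec (y - yhat S hh dh))) := enorm_mono hcl
    rw [hpre] at s1
    have s2 := enorm_add_le
      (((1 : Matrix (Fin p) (Fin p) ℝ) - G.Ld).mulVec (d - dh)
        - (G.Ld * S.Wy).mulVec (h - hh)) w
    have s3 := enorm_sub_le (((1 : Matrix (Fin p) (Fin p) ℝ) - G.Ld).mulVec (d - dh))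
      ((G.Ld * S.Wy).mulVec (h - hh))
    have s4 := enorm_mulVec_le_spec ((1 : Matrix (Fin p) (Fin p) ℝ) - G.Ld) (d - dh)
    have s5 := enorm_mulVec_le_spec (G.Ld * S.Wy) (h - hh)
    linarith
  -- assemble
  intro i
  fin_cases i <;>
    simp [Ad, Matrix.mulVec, dotProduct, Fin.sum_univ_three] <;>
    [linarith [hrow0]; linarith [hrow1]; linarith [hrow2]]

end LSTMmpc
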